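/- arXiv:2107.02013 — 2 statements merged into one kernel-verified Lean document; each statement's English description precedes it below -/
import Mathlib

section
/- For the uniform independence design on p ≥ 4 categories, the induced conditional design satisfies q_{ij} = Σ_{a : i,j ∈ a} μ_a = 1/r_p for all i ≠ j, where r_p = (2^{p−1} − p − 1)/(2^{p−2} − p + 1), and q_{ii} = 1. -/
set_option maxRecDepth 8000

open Finset

private lemma two_pow_ge_aux (n : ℕ) (hn : 2 ≤ n) : n + 2 ≤ 2 ^ n := by
  induction n with
  | zero => omega
  | succ m ih =>
    rcases Nat.lt_or_ge m 2 with h | h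
    · interval_cases m <;> omega
    · have h1 := ih h
      have h2 : 2 ^ (m + 1) = 2 * 2 ^ m := by ring
      omega

private lemma count_card_powerset {α : Type*} [DecidableEq α] (s : Finset α)
    (P : ℕ → Prop) [DecidablePred P] :
    (s.powerset.filter (fun a => P a.card)).card
      = ∑ k ∈ Finset.range (s.card + 1), if P k then s.card.choose k else 0 := by
  rw [Finset.card_filter]
  rw [Finset.sum_powerset_apply_card (fun k => if P k then 1 else 0)]
  refine Finset.sum_congr rfl fun k _ => ?_
  split <;> simp

private lemma count_superset {α : Type*} [Fintype α] [DecidableEq α]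
    (t : Finset α) (Q : ℕ → Prop) [DecidablePred Q] :
    (Finset.univ.filter (fun a : Finset α => t ⊆ a ∧ Q a.card)).card
      = ((Finset.univ \ t).powerset.filter (fun b => Q (b.card + t.card))).card := by
  apply Finset.card_bij' (fun a _ => a \ t) (fun b _ => b ∪ t)
  · intro a ha
    simp only [mem_filter, mem_univ, true_and] at ha
    simp only [mem_filter, mem_powerset]
    refine ⟨sdiff_subset_sdiff (subset_univ a) le_rfl, ?_⟩
    rw [Finset.card_sdiff_add_card_eq_card ha.1]; exact ha.2
  · intro b hb
    simp only [mem_filter, mem_powerset] at hb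
    have hdisj : Disjoint b t := Finset.disjoint_of_subset_left hb.1 (Finset.sdiff_disjoint)
    simp only [mem_filter, mem_univ, true_and]
    refine ⟨subset_union_right, ?_⟩
    rw [Finset.card_union_of_disjoint hdisj]; exact hb.2
  · intro a ha
    simp only [mem_filter, mem_univ, true_and] at ha
    exact Finset.sdiff_union_of_subset ha.1
  · intro b hb
    simp only [mem_filter, mem_powerset] at hb
    have hdisj : Disjoint b t := Finset.disjoint_of_subset_left hb.1 (Finset.sdiff_disjoint)
    exact Finset.union_sdiff_cancel_right hdisj

private lemma sum_ite_split (n : ℕ) (P : ℕ → Prop) [DecidablePred P] :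
    (∑ k ∈ Finset.range (n + 1), if P k then n.choose k else 0)
      + (∑ k ∈ Finset.range (n + 1), if ¬ P k then n.choose k else 0) = 2 ^ n := by
  rw [← Finset.sum_add_distrib]
  have : ∀ k, ((if P k then n.choose k else 0) + if ¬ P k then n.choose k else 0)
      = n.choose k := by
    intro k; by_cases h : P k <;> simp [h]
  simp only [this]
  exact Nat.sum_range_choose n

private lemma sum_ite_not_pair (p : ℕ) (hp : 4 ≤ p) :
    (∑ k ∈ Finset.range ((p - 2) + 1),
        if ¬ (2 ≤ k + 2 ∧ k + 2 ≤ p - 2) then (p - 2).choose k else 0) = p - 1 := by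
  rw [← Finset.sum_filter]
  have hfe : (Finset.range ((p - 2) + 1)).filter
      (fun k => ¬ (2 ≤ k + 2 ∧ k + 2 ≤ p - 2)) = {p - 3, p - 2} := by
    ext k
    rw [Finset.mem_filter, Finset.mem_range, Finset.mem_insert, Finset.mem_singleton]
    omega
  rw [hfe, Finset.sum_pair (by omega : p - 3 ≠ p - 2)]
  have h1 : p - 3 = (p - 2) - 1 := by omega
  have h2 : (p - 2).choose ((p - 2) - 1) = (p - 2).choose 1 :=
    Nat.choose_symm (by omega)
  rw [h1, h2, Nat.choose_one_right, Nat.choose_self]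
  omega

private lemma sum_ite_not_single (p : ℕ) (hp : 4 ≤ p) :
    (∑ k ∈ Finset.range ((p - 1) + 1),
        if ¬ (2 ≤ k + 1 ∧ k + 1 ≤ p - 2) then (p - 1).choose k else 0) = p + 1 := by
  rw [← Finset.sum_filter]
  have hfe : (Finset.range ((p - 1) + 1)).filter
      (fun k => ¬ (2 ≤ k + 1 ∧ k + 1 ≤ p - 2)) = {0, p - 2, p - 1} := by
    ext k
    rw [Finset.mem_filter, Finset.mem_range, Finset.mem_insert, Finset.mem_insert,
      Finset.mem_singleton]
    omega
  rw [hfe]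
  rw [Finset.sum_insert (by simp; omega), Finset.sum_pair (by omega : p - 2 ≠ p - 1)]
  have h2 : (p - 1).choose (p - 2) = (p - 1).choose 1 := by
    have h0 : p - 2 = (p - 1) - 1 := by omega
    rw [h0]
    exact Nat.choose_symm (by omega)
  rw [h2, Nat.choose_one_right, Nat.choose_self, Nat.choose_zero_right]
  omega

/-- For the uniform independence design on `p ≥ 4` categories
(`ν a = 1/(2^p − 2p − 2)` when `2 ≤ |a| ≤ p−2` and `0` otherwise, `μ a = ν a + ν aᶜ`),
the induced conditional design satisfies `q i j = ∑_{a : i,j ∈ a} μ a = 1/r_p` for all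
`i ≠ j` where `r_p = (2^{p−1} − p − 1)/(2^{p−2} − p + 1)`, and `q i i = 1`. -/
theorem uniform_design_moment_entries
    (p : ℕ) (hp : 4 ≤ p)
    (ν : Finset (Fin p) → ℝ)
    (hν : ∀ a : Finset (Fin p),
      ν a = if 2 ≤ a.card ∧ a.card ≤ p - 2
            then 1 / ((2 : ℝ) ^ p - 2 * (p : ℝ) - 2) else 0)
    (μ : Finset (Fin p) → ℝ) (hμ : ∀ a : Finset (Fin p), μ a = ν a + ν aᶜ)
    (rp : ℝ)
    (hrp : rp = ((2 : ℝ) ^ (p - 1) - (p : ℝ) - 1) / ((2 : ℝ) ^ (p - 2) - (p : ℝ) + 1)) :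
    (∀ i j : Fin p, i ≠ j →
      (∑ a ∈ Finset.filter (fun a : Finset (Fin p) => i ∈ a ∧ j ∈ a) Finset.univ, μ a)
        = 1 / rp) ∧
    (∀ i : Fin p,
      (∑ a ∈ Finset.filter (fun a : Finset (Fin p) => i ∈ a) Finset.univ, μ a) = 1) := by
  -- basic numeric facts
  set x : ℝ := (2 : ℝ) ^ (p - 2) with hxdef
  have hxp : (p : ℝ) ≤ x := by
    have h := two_pow_ge_aux (p - 2) (by omega)
    have h2 : (p : ℕ) ≤ 2 ^ (p - 2) := by omega
    rw [hxdef]; exact_mod_cast h2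
  have hp4 : (4 : ℝ) ≤ (p : ℝ) := by exact_mod_cast hp
  have h2p1 : (2 : ℝ) ^ (p - 1) = 2 * x := by
    rw [hxdef, ← pow_succ']
    congr 1; omega
  have h2p : (2 : ℝ) ^ p = 4 * x := by
    have : (2 : ℝ) ^ p = 2 * 2 ^ (p - 1) := by
      rw [← pow_succ']; congr 1; omega
    rw [this, h2p1]; ring
  have hA : (0 : ℝ) < 2 * x - p - 1 := by linarith
  have hB : (0 : ℝ) < x - p + 1 := by linarith
  -- μ a = 2 * ν a
  have hcard_le : ∀ a : Finset (Fin p), a.card ≤ p := by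
    intro a
    simpa using Finset.card_le_univ a
  have hμν : ∀ a : Finset (Fin p), μ a = 2 * ν a := by
    intro a
    rw [hμ, hν a, hν aᶜ, Finset.card_compl, Fintype.card_fin]
    have hiff : (2 ≤ p - a.card ∧ p - a.card ≤ p - 2) ↔ (2 ≤ a.card ∧ a.card ≤ p - 2) := by
      have := hcard_le a; omega
    rw [if_congr hiff rfl rfl]
    ring
  -- generic: sum of μ over a family = 2 * card * (1/N)
  have hsum : ∀ (pred : Finset (Fin p) → Prop) [DecidablePred pred],
      (∑ a ∈ Finset.filter (fun a => pred a) Finset.univ, μ a)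
        = 2 * ((Finset.univ.filter (fun a : Finset (Fin p) =>
              pred a ∧ (2 ≤ a.card ∧ a.card ≤ p - 2))).card : ℝ)
            * (1 / ((2 : ℝ) ^ p - 2 * (p : ℝ) - 2)) := by
    intro pred _
    simp only [hμν, hν]
    rw [← Finset.mul_sum, ← Finset.sum_filter, Finset.filter_filter,
      Finset.sum_const, nsmul_eq_mul]
    ring
  constructor
  · intro i j hij
    rw [hsum (fun a => i ∈ a ∧ j ∈ a)]
    -- rewrite the filter predicate as superset condition
    have hpred : (Finset.univ.filter (fun a : Finset (Fin p) =>
          (i ∈ a ∧ j ∈ a) ∧ (2 ≤ a.card ∧ a.card ≤ p - 2)))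
        = (Finset.univ.filter (fun a : Finset (Fin p) =>
          ({i, j} : Finset (Fin p)) ⊆ a ∧ (2 ≤ a.card ∧ a.card ≤ p - 2))) := by
      apply Finset.filter_congr
      intro a _
      simp [Finset.insert_subset_iff]
    rw [hpred, count_superset ({i, j} : Finset (Fin p)) (fun c => 2 ≤ c ∧ c ≤ p - 2)]
    have hcardt : ({i, j} : Finset (Fin p)).card = 2 := by
      rw [Finset.card_insert_of_notMem (by simpa using hij), Finset.card_singleton]
    have hcards : ((Finset.univ : Finset (Fin p)) \ {i, j}).card = p - 2 := by
      rw [Finset.card_sdiff_of_subset (Finset.subset_univ _), hcardt, Finset.card_univ,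
        Fintype.card_fin]
    rw [hcardt, count_card_powerset ((Finset.univ : Finset (Fin p)) \ {i, j}) (fun k => 2 ≤ k + 2 ∧ k + 2 ≤ p - 2), hcards]
    -- evaluate the count
    have hK := sum_ite_split (p - 2) (fun k => 2 ≤ k + 2 ∧ k + 2 ≤ p - 2)
    rw [sum_ite_not_pair p hp] at hK
    set K : ℕ := ∑ k ∈ Finset.range ((p - 2) + 1),
        if 2 ≤ k + 2 ∧ k + 2 ≤ p - 2 then (p - 2).choose k else 0 with hKdef
    have hKr : (K : ℝ) = x - p + 1 := by
      have : ((K + (p - 1) : ℕ) : ℝ) = ((2 ^ (p - 2) : ℕ) : ℝ) := by exact_mod_cast hK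
      push_cast [Nat.cast_sub (by omega : 1 ≤ p)] at this
      rw [hxdef]; linarith
    have hne : (4 * x - 2 * (p : ℝ) - 2) ≠ 0 := by
      have : (0:ℝ) < 4 * x - 2 * (p : ℝ) - 2 := by linarith
      exact ne_of_gt this
    rw [hKr, hrp, h2p1, h2p, one_div_div, mul_one_div,
      div_eq_div_iff hne (ne_of_gt hA)]
    ring
  · intro i
    rw [hsum (fun a => i ∈ a)]
    have hpred : (Finset.univ.filter (fun a : Finset (Fin p) =>
          (i ∈ a) ∧ (2 ≤ a.card ∧ a.card ≤ p - 2)))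
        = (Finset.univ.filter (fun a : Finset (Fin p) =>
          ({i} : Finset (Fin p)) ⊆ a ∧ (2 ≤ a.card ∧ a.card ≤ p - 2))) := by
      apply Finset.filter_congr
      intro a _
      simp
    rw [hpred, count_superset ({i} : Finset (Fin p)) (fun c => 2 ≤ c ∧ c ≤ p - 2)]
    have hcards : ((Finset.univ : Finset (Fin p)) \ {i}).card = p - 1 := by
      rw [Finset.card_sdiff_of_subset (Finset.subset_univ _), Finset.card_singleton,
        Finset.card_univ, Fintype.card_fin]
    rw [Finset.card_singleton, count_card_powerset ((Finset.univ : Finset (Fin p)) \ {i}) (fun k => 2 ≤ k + 1 ∧ k + 1 ≤ p - 2), hcards]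
    have hK := sum_ite_split (p - 1) (fun k => 2 ≤ k + 1 ∧ k + 1 ≤ p - 2)
    rw [sum_ite_not_single p hp] at hK
    set K : ℕ := ∑ k ∈ Finset.range ((p - 1) + 1),
        if 2 ≤ k + 1 ∧ k + 1 ≤ p - 2 then (p - 1).choose k else 0 with hKdef
    have hKr : (K : ℝ) = 2 * x - p - 1 := by
      have : ((K + (p + 1) : ℕ) : ℝ) = ((2 ^ (p - 1) : ℕ) : ℝ) := by exact_mod_cast hK
      push_cast at this
      rw [← h2p1]; linarith
    have hne : (4 * x - 2 * (p : ℝ) - 2) ≠ 0 := by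
      have : (0:ℝ) < 4 * x - 2 * (p : ℝ) - 2 := by linarith
      exact ne_of_gt this
    rw [hKr, h2p, mul_one_div, div_eq_one_iff_eq hne]
    ring
end

section
/- Under the product mechanism with identifiable conditional designs μ^A and μ^B (i.e., {v_a : μ_a^A > 0} spans ℝ^p and {v_b : μ_b^B > 0} spans ℝ^q), X ⊥ Y if and only if A ⊥ B. -/
/-- Under the product mechanism with identifiable conditional designs
`μ^A` and `μ^B` (indicator vectors of positively weighted subsets span the full spaces),
`X ⊥ Y` if and only if `A ⊥ B`, where `A ⊥ B` means
`v_aᵀ W v_b = (v_aᵀ w_X)(v_bᵀ w_Y)` for all `a, b` with `μ_a^A μ_b^B > 0`. -/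
theorem product_mechanism_independence_iff
    (p q : ℕ) (W : Fin p → Fin q → ℝ) (hW0 : ∀ x y, 0 ≤ W x y)
    (hWsum : ∑ x, ∑ y, W x y = 1)
    (μA : Finset (Fin p) → ℝ) (hμA0 : ∀ a, 0 ≤ μA a)
    (hμA1 : ∀ x : Fin p,
      ∑ a ∈ Finset.filter (fun a : Finset (Fin p) => x ∈ a) Finset.univ, μA a = 1)
    (μB : Finset (Fin q) → ℝ) (hμB0 : ∀ b, 0 ≤ μB b)
    (hμB1 : ∀ y : Fin q,
      ∑ b ∈ Finset.filter (fun b : Finset (Fin q) => y ∈ b) Finset.univ, μB b = 1)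
    (hidA : ∀ u : Fin p → ℝ,
      (∀ a : Finset (Fin p), 0 < μA a → (∑ x ∈ a, u x) = 0) → u = 0)
    (hidB : ∀ u : Fin q → ℝ,
      (∀ b : Finset (Fin q), 0 < μB b → (∑ y ∈ b, u y) = 0) → u = 0)
    (wX : Fin p → ℝ) (hwX : ∀ x, wX x = ∑ y, W x y)
    (wY : Fin q → ℝ) (hwY : ∀ y, wY y = ∑ x, W x y) :
    (∀ x y, W x y = wX x * wY y) ↔
    (∀ (a : Finset (Fin p)) (b : Finset (Fin q)), 0 < μA a * μB b →
      (∑ x ∈ a, ∑ y ∈ b, W x y) = (∑ x ∈ a, wX x) * (∑ y ∈ b, wY y)) := by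
  constructor
  · intro h a b _
    simp only [h, ← Finset.sum_mul, ← Finset.mul_sum]
  · intro h x y
    have key : ∀ b : Finset (Fin q), 0 < μB b →
        ∀ x : Fin p, (∑ y ∈ b, W x y) - wX x * (∑ y ∈ b, wY y) = 0 := by
      intro b hb
      have := hidA (fun x => (∑ y ∈ b, W x y) - wX x * (∑ y ∈ b, wY y)) ?_
      · intro x; exact congrFun this x
      · intro a ha
        have := h a b (mul_pos ha hb)
        simp only [Finset.sum_sub_distrib, ← Finset.sum_mul]
        linarith
    have := hidB (fun y => W x y - wX x * wY y) ?_
    · have h2 := congrFun this y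
      simp only [Pi.zero_apply] at h2
      linarith
    · intro b hb
      have := key b hb x
      simp only [Finset.sum_sub_distrib, ← Finset.mul_sum]
      linarith
end
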